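/- Let F be a finite field of odd cardinality q, let a ∈ F be nonzero, and let n be an odd positive integer not divisible by the characteristic of F. Then the map F → F given by x ↦ D_n(x, a), evaluation of the Dickson polynomial of the first kind with parameter a, is a bijection of F if and only if gcd(n, q² − 1) = 1. -/

import Mathlib

open Polynomial

theorem dicksonAux_eval_add {R : Type*} [CommRing R] (a x y : R) (h : x * y = a) :
    ∀ n, (dickson 1 a n).eval (x + y) = x ^ n + y ^ n
  | 0 => by simp [dickson_zero]; norm_num
  | 1 => by simp [dickson_one]
  | n + 2 => by
    simp only [eval_sub, eval_mul, dicksonAux_eval_add a x y h _, eval_X, dickson_add_two,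
      eval_C]
    conv_lhs => simp only [pow_succ', add_mul, mul_add, ← h, ← mul_assoc, mul_comm y x]
    ring

theorem auxExistsPreimage {F K : Type*} [Field F] [Fintype F] [Field K] (φ : F →+* K)
    (z : K) (hz : z ^ Fintype.card F = z) : ∃ x : F, φ x = z := by
  classical
  set q := Fintype.card F with hq
  have hq2 : 2 ≤ q := Fintype.one_lt_card
  set P : Polynomial K := X ^ q - X with hP
  have hPne : P ≠ 0 := by
    intro h
    have := congrArg (fun p => coeff p q) h
    simp only [hP, coeff_sub, coeff_X_pow, if_pos rfl, coeff_X, if_neg (by omega : ¬1 = q),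
      coeff_zero] at this
    norm_num at this
  have hdeg : P.natDegree ≤ q := by
    refine (natDegree_sub_le _ _).trans ?_
    simp [natDegree_X_pow]
    omega
  have hroots : P.roots.toFinset.card ≤ q :=
    (Multiset.toFinset_card_le _).trans ((card_roots' P).trans hdeg)
  set s : Finset K := Finset.univ.image φ with hs
  have hscard : s.card = q := by
    rw [hs, Finset.card_image_of_injective _ φ.injective, Finset.card_univ]
  have hsub : s ⊆ P.roots.toFinset := by
    intro w hw
    rw [hs, Finset.mem_image] at hw
    obtain ⟨x, -, rfl⟩ := hw
    rw [Multiset.mem_toFinset, mem_roots hPne]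
    simp only [IsRoot, hP, eval_sub, eval_pow, eval_X]
    rw [← map_pow, FiniteField.pow_card, sub_self]
  have heq : s = P.roots.toFinset :=
    Finset.eq_of_subset_of_card_le hsub (by rw [hscard]; exact hroots)
  have hzmem : z ∈ P.roots.toFinset := by
    rw [Multiset.mem_toFinset, mem_roots hPne]
    simp only [IsRoot, hP, eval_sub, eval_pow, eval_X, hz, sub_self]
  rw [← heq, hs, Finset.mem_image] at hzmem
  obtain ⟨x, -, hx⟩ := hzmem
  exact ⟨x, hx⟩

theorem auxPowInj {K : Type*} [Field K] {u w : K} (hw : w ≠ 0) {n m : ℕ}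
    (hg : Nat.gcd n m = 1) (h1 : u ^ n = w ^ n) (h2 : u ^ m = w ^ m) : u = w := by
  have hz1 : (u / w) ^ n = 1 := by rw [div_pow, h1, div_self (pow_ne_zero _ hw)]
  have hz2 : (u / w) ^ m = 1 := by rw [div_pow, h2, div_self (pow_ne_zero _ hw)]
  have hd := Nat.dvd_gcd (orderOf_dvd_of_pow_eq_one hz1) (orderOf_dvd_of_pow_eq_one hz2)
  rw [hg, Nat.dvd_one, orderOf_eq_one_iff] at hd
  exact (div_eq_one_iff_eq hw).mp hd

/-- **Lemma 3.11 (monPrecCheb), permutation-polynomial content.**  For `F` a finite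
field of odd cardinality `q`, `a ∈ Fˣ`, and `n` odd and prime to the characteristic, the
Dickson polynomial `D_n(·, a)` permutes `F` iff `gcd(n, q² - 1) = 1`. -/
theorem davenport_dicksonExceptional
    {F : Type*} [Field F] [Fintype F] (hodd : Odd (Fintype.card F))
    (a : F) (ha : a ≠ 0) (n : ℕ) (hn : 0 < n) (hnodd : Odd n)
    (hchar : ¬ (ringChar F ∣ n)) :
    Function.Bijective (fun x : F => (Polynomial.dickson 1 a n).eval x) ↔
      Nat.gcd n (Fintype.card F ^ 2 - 1) = 1 := by
  classical
  set q := Fintype.card F with hqdef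
  set r := ringChar F with hrdef
  obtain ⟨k, hrprime, hcard⟩ := FiniteField.card F r
  haveI : Fact r.Prime := ⟨hrprime⟩
  set K := AlgebraicClosure F with hK
  set φ := algebraMap F K with hφ
  haveI : CharP K r := charP_of_injective_ringHom φ.injective r
  have hq2 : 2 ≤ q := Fintype.one_lt_card
  have hq21 : 1 ≤ q ^ 2 := Nat.one_le_pow _ _ (by omega)
  have hadd : ∀ x y : K, (x + y) ^ q = x ^ q + y ^ q := by
    intro x y; rw [hqdef, hcard]; exact add_pow_char_pow x y r k
  have hφq : ∀ x : F, (φ x) ^ q = φ x := by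
    intro x; rw [← map_pow, FiniteField.pow_card]
  set A := φ a with hA
  have hA0 : A ≠ 0 := fun h => ha ((_root_.map_eq_zero φ).mp h)
  have hAq : A ^ q = A := hφq a
  have hAq2 : A ^ (q ^ 2 - 1) * A = A := by
    rw [← pow_succ, (by omega : q ^ 2 - 1 + 1 = q ^ 2), pow_two, pow_mul, hAq, hAq]
  have hAm : A ^ (q ^ 2 - 1) = 1 := mul_right_cancel₀ hA0 (by rw [hAq2, one_mul])
  have hm : ∀ w : K, w ≠ 0 → w ^ q ^ 2 = w → w ^ (q ^ 2 - 1) = 1 := by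
    intro w hw hwq
    apply mul_right_cancel₀ hw
    rw [← pow_succ, (by omega : q ^ 2 - 1 + 1 = q ^ 2), hwq, one_mul]
  -- every element of F is of the form u + A/u with u^{q²} = u
  have hrep : ∀ x : F, ∃ u : K, u ≠ 0 ∧ u ^ q ^ 2 = u ∧ φ x = u + A * u⁻¹ := by
    intro x
    obtain ⟨u, hu⟩ := IsAlgClosed.exists_root (X ^ 2 - C (φ x) * X + C A)
      (by
        have : (X ^ 2 - C (φ x) * X + C A : Polynomial K).degree = 2 := by compute_degree!
        rw [this]; decide)
    have hu' : u ^ 2 - φ x * u + A = 0 := by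
      simpa [IsRoot] using hu
    have hu0 : u ≠ 0 := by
      rintro rfl
      apply hA0
      simpa using hu'
    have hxu : φ x = u + A * u⁻¹ := by
      unfold K at *
      field_simp
      linear_combination -hu'
    have hroot : (u ^ q) ^ 2 - φ x * u ^ q + A = 0 := by
      have h0 : (u ^ 2 - φ x * u + A) ^ q = 0 := by rw [hu']; exact zero_pow (by omega)
      have hexp : (u ^ 2 - φ x * u + A) ^ q
          = (u ^ q) ^ 2 - φ x * u ^ q + A := by
        rw [sub_eq_add_neg, hadd, hadd, Odd.neg_pow hodd, mul_pow, hφq, ← pow_mul,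
          mul_comm 2 q, pow_mul, hAq, ← sub_eq_add_neg]
      rw [hexp] at h0; exact h0
    have hfac : (u ^ q - u) * (u ^ q - A * u⁻¹) = 0 := by
      have hAu : A * u⁻¹ = φ x - u := eq_sub_of_add_eq (by rw [hxu]; ring)
      rw [hAu]
      linear_combination hroot - hu'
    have huq2 : u ^ q ^ 2 = u := by
      rcases mul_eq_zero.mp hfac with h | h
      · have huq : u ^ q = u := sub_eq_zero.mp h
        rw [pow_two, pow_mul, huq, huq]
      · have huq : u ^ q = A * u⁻¹ := sub_eq_zero.mp h
        rw [pow_two, pow_mul, huq, mul_pow, hAq, inv_pow, huq]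
        unfold K at *
        field_simp
    exact ⟨u, hu0, huq2, hxu⟩
  have heval : ∀ (x : F) (u : K), u ≠ 0 → φ x = u + A * u⁻¹ →
      φ ((dickson 1 a n).eval x) = u ^ n + (A * u⁻¹) ^ n := by
    intro x u hu0 hx
    have h1 : u * (A * u⁻¹) = A := by unfold K at *; field_simp
    have h2 := dicksonAux_eval_add A u (A * u⁻¹) h1 n
    calc φ ((dickson 1 a n).eval x) = ((dickson 1 a n).map φ).eval (φ x) := by
          rw [eval_map, eval₂_at_apply]
      _ = (dickson 1 A n).eval (u + A * u⁻¹) := by rw [map_dickson, hx]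
      _ = u ^ n + (A * u⁻¹) ^ n := h2
  constructor
  · intro hbij
    by_contra hg
    set d := Nat.gcd n (q ^ 2 - 1) with hd
    have hpp : d.minFac.Prime := Nat.minFac_prime hg
    set p := d.minFac with hp
    have hpn : p ∣ n := (Nat.minFac_dvd d).trans (Nat.gcd_dvd_left _ _)
    have hpq : p ∣ q ^ 2 - 1 := (Nat.minFac_dvd d).trans (Nat.gcd_dvd_right _ _)
    have hpodd : Odd p := hpp.odd_of_ne_two (by
      rintro h
      have h2 := hpn
      rw [h] at h2
      rw [Nat.odd_iff] at hnodd
      omega)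
    have hpK : (p : K) ≠ 0 := by
      rw [Ne, CharP.cast_eq_zero_iff K r]
      intro hdvd
      have hrq : r ∣ q := by rw [hqdef, hcard]; exact dvd_pow_self r k.2.ne'
      have h2 : r ∣ q ^ 2 := hrq.trans (dvd_pow_self q two_ne_zero)
      have heqrp : r = p := (Nat.prime_dvd_prime_iff_eq hrprime hpp).mp hdvd
      have h3 : r ∣ q ^ 2 - 1 := heqrp ▸ hpq
      have h4 : r ∣ 1 := by
        have h5 := Nat.dvd_sub h2 h3
        rwa [(by omega : q ^ 2 - (q ^ 2 - 1) = 1)] at h5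
      exact hrprime.one_lt.ne' (Nat.dvd_one.mp h4)
    -- get a nontrivial p-th root of unity
    obtain ⟨ζ, hζroot⟩ := IsAlgClosed.exists_root (∑ i ∈ Finset.range p, (X : Polynomial K) ^ i)
      (by
        intro h0
        have hc := eq_C_of_degree_le_zero h0.le
        have hmul := geom_sum_mul (X : Polynomial K) p
        rw [hc] at hmul
        have hd1 : ((X : Polynomial K) ^ p - 1).degree = p := by
          rw [← C_1]; exact degree_X_pow_sub_C hpp.pos 1
        have hXd : ((X : Polynomial K) - 1).degree = 1 := by
          rw [← C_1]; exact degree_X_sub_C 1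
        rw [← hmul, degree_mul, hXd] at hd1
        have hle : (C ((∑ i ∈ Finset.range p, (X : Polynomial K) ^ i).coeff 0)).degree ≤ 0 :=
          degree_C_le
        have hp3 : 3 ≤ p := by
          rcases hpodd with ⟨m, hm'⟩
          have := hpp.two_le
          omega
        have hple : (p : WithBot ℕ) ≤ 0 + 1 := by
          rw [← hd1]; exact add_le_add_left hle 1
        rw [zero_add] at hple
        exact absurd hple (by exact_mod_cast (by omega : ¬ p ≤ 1)))
    have hζsum : ∑ i ∈ Finset.range p, ζ ^ i = 0 := by
      simpa [IsRoot] using hζroot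
    have hζp : ζ ^ p = 1 := by
      have hgm := geom_sum_mul ζ p
      rw [hζsum, zero_mul] at hgm
      exact sub_eq_zero.mp hgm.symm
    have hζ1 : ζ ≠ 1 := by
      rintro rfl
      simp only [one_pow, Finset.sum_const, Finset.card_range, nsmul_eq_mul, mul_one] at hζsum
      exact hpK hζsum
    have hζ0 : ζ ≠ 0 := by
      intro h
      rw [h, zero_pow hpp.pos.ne'] at hζp
      exact zero_ne_one hζp
    have hsq : ∀ z : K, z ≠ 0 → z ^ 2 = z → z = 1 := by
      intro z hz h2
      apply mul_left_cancel₀ hz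
      rw [mul_one, ← pow_two, h2]
    have hζ2 : ζ ^ 2 ≠ 1 := by
      intro h2
      obtain ⟨m, hm'⟩ := hpodd
      apply hζ1
      calc ζ = (ζ ^ 2) ^ m * ζ := by rw [h2, one_pow, one_mul]
        _ = ζ ^ (2 * m + 1) := by rw [← pow_mul, ← pow_succ]
        _ = ζ ^ p := by rw [← hm']
        _ = 1 := hζp
    have hζn : ζ ^ n = 1 := by
      obtain ⟨c, hc'⟩ := hpn
      rw [hc', pow_mul, hζp, one_pow]
    have hq2fac : q ^ 2 - 1 = (q - 1) * (q + 1) := by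
      have h1 : (q - 1) * (q + 1) = q * q + q - q - 1 := by
        rw [Nat.sub_mul, Nat.mul_add, Nat.mul_one, Nat.one_mul]
        omega
      rw [h1, pow_two]
      omega
    have hpcase : p ∣ q - 1 ∨ p ∣ q + 1 := by
      rw [hq2fac] at hpq
      exact (Nat.Prime.dvd_mul hpp).mp hpq
    have main : ∃ x₀ y₀ : F, x₀ ≠ y₀ ∧
        (dickson 1 a n).eval x₀ = (dickson 1 a n).eval y₀ := by
      rcases hpcase with hc | hc
      · -- p ∣ q - 1
        obtain ⟨c, hc'⟩ := hc
        have hζq : ζ ^ q = ζ := by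
          have h1 : ζ ^ (q - 1) = 1 := by rw [hc', pow_mul, hζp, one_pow]
          calc ζ ^ q = ζ ^ (q - 1 + 1) := by rw [(by omega : q - 1 + 1 = q)]
            _ = ζ ^ (q - 1) * ζ := pow_succ ζ (q - 1)
            _ = ζ := by rw [h1, one_mul]
        set ζ' := if ζ = A then ζ ^ 2 else ζ with hζ'def
        have hζ'0 : ζ' ≠ 0 := by
          rw [hζ'def]; split
          · exact pow_ne_zero _ hζ0
          · exact hζ0
        have hζ'1 : ζ' ≠ 1 := by
          rw [hζ'def]; split
          · exact hζ2
          · exact hζ1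
        have hζ'A : ζ' ≠ A := by
          rw [hζ'def]; split
          · rename_i h
            intro h2
            exact hζ1 (hsq ζ hζ0 (by rw [h2, ← h]))
          · rename_i h; exact h
        have hζ'q : ζ' ^ q = ζ' := by
          rw [hζ'def]; split
          · rw [← pow_mul, mul_comm, pow_mul, hζq]
          · exact hζq
        have hζ'n : ζ' ^ n = 1 := by
          rw [hζ'def]; split
          · rw [← pow_mul, mul_comm, pow_mul, hζn, one_pow]
          · exact hζn
        obtain ⟨x₀, hx₀⟩ := auxExistsPreimage φ (1 + A)
          (by rw [← hqdef, hadd, one_pow, hAq])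
        obtain ⟨y₀, hy₀⟩ := auxExistsPreimage φ (ζ' + A * ζ'⁻¹)
          (by rw [← hqdef, hadd, mul_pow, inv_pow, hζ'q, hAq])
        refine ⟨x₀, y₀, ?_, ?_⟩
        · intro h
          have heq2 : (1 : K) + A = ζ' + A * ζ'⁻¹ := by rw [← hx₀, ← hy₀, h]
          have h3 : (ζ' - 1) * (ζ' - A) = 0 := by
            have h4 := congrArg (· * ζ') heq2
            rw [add_mul, add_mul, mul_assoc, inv_mul_cancel₀ hζ'0, mul_one] at h4
            linear_combination -h4
          rcases mul_eq_zero.mp h3 with h5 | h5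
          · exact hζ'1 (sub_eq_zero.mp h5)
          · exact hζ'A (sub_eq_zero.mp h5)
        · apply φ.injective
          rw [heval x₀ 1 one_ne_zero (by rw [hx₀, inv_one, mul_one]),
            heval y₀ ζ' hζ'0 hy₀]
          simp [mul_pow, inv_pow, hζ'n]
      · -- p ∣ q + 1
        obtain ⟨c, hc'⟩ := hc
        have hζq1 : ζ ^ (q + 1) = 1 := by rw [hc', pow_mul, hζp, one_pow]
        obtain ⟨u, hu⟩ := IsAlgClosed.exists_root ((X : Polynomial K) ^ (q + 1) - C A)
          (by
            rw [degree_X_pow_sub_C (by omega : 0 < q + 1)]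
            exact_mod_cast (by omega : (q + 1 : ℕ) ≠ 0))
        have hu' : u ^ (q + 1) = A := by
          have h1 : u ^ (q + 1) - A = 0 := by simpa [IsRoot] using hu
          exact sub_eq_zero.mp h1
        have hu0 : u ≠ 0 := by
          rintro rfl
          apply hA0
          rw [← hu', zero_pow (by omega : q + 1 ≠ 0)]
        set ζ' := if ζ * u ^ 2 = A then ζ ^ 2 else ζ with hζ'def
        have hζ'0 : ζ' ≠ 0 := by
          rw [hζ'def]; split
          · exact pow_ne_zero _ hζ0
          · exact hζ0
        have hζ'1 : ζ' ≠ 1 := by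
          rw [hζ'def]; split
          · exact hζ2
          · exact hζ1
        have hζ'q1 : ζ' ^ (q + 1) = 1 := by
          rw [hζ'def]; split
          · rw [← pow_mul, mul_comm, pow_mul, hζq1, one_pow]
          · exact hζq1
        have hζ'n : ζ' ^ n = 1 := by
          rw [hζ'def]; split
          · rw [← pow_mul, mul_comm, pow_mul, hζn, one_pow]
          · exact hζn
        have hζ'u : ζ' * u ^ 2 ≠ A := by
          rw [hζ'def]; split
          · rename_i h
            intro h2
            have h3 : ζ ^ 2 * u ^ 2 = ζ * u ^ 2 := by rw [h2, h]
            have h4 : ζ ^ 2 = ζ := mul_right_cancel₀ (pow_ne_zero 2 hu0) h3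
            exact hζ1 (hsq ζ hζ0 h4)
          · rename_i h; exact h
        have hwfix : ∀ w : K, w ≠ 0 → w ^ (q + 1) = A →
            (w + A * w⁻¹) ^ q = w + A * w⁻¹ := by
          intro w hw hwA
          have hwq : w ^ q = A * w⁻¹ := by
            rw [eq_mul_inv_iff_mul_eq₀ hw, ← pow_succ]
            exact hwA
          calc (w + A * w⁻¹) ^ q = w ^ q + (A * w⁻¹) ^ q := hadd w (A * w⁻¹)
            _ = A * w⁻¹ + A * (A * w⁻¹)⁻¹ := by rw [mul_pow, inv_pow, hwq, hAq]
            _ = w + A * w⁻¹ := by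
                unfold K at *
                field_simp
                ring
        obtain ⟨x₀, hx₀⟩ := auxExistsPreimage φ (u + A * u⁻¹)
          (by rw [← hqdef]; exact hwfix u hu0 hu')
        have hζuA : (ζ' * u) ^ (q + 1) = A := by rw [mul_pow, hζ'q1, one_mul, hu']
        obtain ⟨y₀, hy₀⟩ := auxExistsPreimage φ (ζ' * u + A * (ζ' * u)⁻¹)
          (by rw [← hqdef]; exact hwfix (ζ' * u) (mul_ne_zero hζ'0 hu0) hζuA)
        refine ⟨x₀, y₀, ?_, ?_⟩
        · intro h
          have heq2 : u + A * u⁻¹ = ζ' * u + A * (ζ' * u)⁻¹ := by rw [← hx₀, ← hy₀, h]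
          have h3 : (ζ' - 1) * (ζ' * u ^ 2 - A) = 0 := by
            unfold K at *
            field_simp at heq2
            have h3' : u * ((ζ' - 1) * (ζ' * u ^ 2 - A)) = 0 := by linear_combination -u * heq2
            exact (mul_eq_zero.mp h3').resolve_left hu0
          rcases mul_eq_zero.mp h3 with h5 | h5
          · exact hζ'1 (sub_eq_zero.mp h5)
          · exact hζ'u (sub_eq_zero.mp h5)
        · apply φ.injective
          rw [heval x₀ u hu0 hx₀, heval y₀ (ζ' * u) (mul_ne_zero hζ'0 hu0) hy₀]
          simp [mul_pow, inv_pow, mul_inv, hζ'n]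
    obtain ⟨x₀, y₀, hne, he⟩ := main
    exact hne (hbij.injective he)
  · intro hg
    rw [Fintype.bijective_iff_injective_and_card]
    refine ⟨?_, rfl⟩
    intro x y hxy
    have hxy' : (dickson 1 a n).eval x = (dickson 1 a n).eval y := hxy
    obtain ⟨u, hu0, huq, hxu⟩ := hrep x
    obtain ⟨v, hv0, hvq, hyv⟩ := hrep y
    have hDx := heval x u hu0 hxu
    have hDy := heval y v hv0 hyv
    have heq2 : u ^ n + (A * u⁻¹) ^ n = v ^ n + (A * v⁻¹) ^ n := by
      rw [← hDx, ← hDy, hxy']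
    have hum : u ^ (q ^ 2 - 1) = 1 := hm u hu0 huq
    have hvm : v ^ (q ^ 2 - 1) = 1 := hm v hv0 hvq
    have hkey : (u ^ n - v ^ n) * (u ^ n * v ^ n - A ^ n) = 0 := by
      rw [mul_pow, mul_pow, inv_pow, inv_pow] at heq2
      unfold K at *
      field_simp at heq2
      linear_combination heq2
    rcases mul_eq_zero.mp hkey with h | h
    · have huv := auxPowInj hv0 hg (sub_eq_zero.mp h) (by rw [hum, hvm])
      apply φ.injective
      rw [hxu, hyv, huv]
    · have hw0 : A * v⁻¹ ≠ 0 := mul_ne_zero hA0 (inv_ne_zero hv0)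
      have h1 : u ^ n = (A * v⁻¹) ^ n := by
        rw [mul_pow, inv_pow, eq_mul_inv_iff_mul_eq₀ (pow_ne_zero _ hv0)]
        exact sub_eq_zero.mp h
      have h2 : u ^ (q ^ 2 - 1) = (A * v⁻¹) ^ (q ^ 2 - 1) := by
        rw [hum, mul_pow, inv_pow, hAm, hvm, inv_one, mul_one]
      have huv := auxPowInj hw0 hg h1 h2
      apply φ.injective
      rw [hxu, hyv, huv]
      unfold K at *
      field_simp
      ring
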